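/- Given a coherent casebase D, if D' ⊆ D is concise w.r.t. D (i.e., D' equals the set of examples in D that are surprising w.r.t. D'), then D' is the unique such subset. -/

import Mathlib

namespace AACBR

/-- In an AF with arguments `args` and attack `att`, a set `E` defends argument `a`
iff every attacker of `a` (within `args`) is attacked by some element of `E`. -/
def defends {A : Type} (args : Set A) (att : A → A → Prop) (E : Set A) (a : A) : Prop :=
  ∀ b ∈ args, att b a → ∃ c ∈ E, att c b

/-- `G_0` is the set of unattacked arguments; `G_{i+1}` is the set of arguments
defended by `G_i`. -/
def groundedSeq {A : Type} (args : Set A) (att : A → A → Prop) : ℕ → Set A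
  | 0 => {a ∈ args | ∀ b ∈ args, ¬ att b a}
  | n + 1 => {a ∈ args | defends args att (groundedSeq args att n) a}

/-- The grounded extension `⋃ i, G_i`. -/
def grounded {A : Type} (args : Set A) (att : A → A → Prop) : Set A :=
  ⋃ i, groundedSeq args att i

variable {X : Type}

/-- Cases are pairs of a characterisation (in the partially ordered set `X`, where
`α ≤ β` reads "`α` is less specific than `β`") and one of the two outcomes
(modelled as `Bool`). Attack between labelled cases of the casebase `cb`
(which includes the default argument): `a` attacks `b` iff their outcomes differ,
`a` is at least as specific as `b`, and no case of `cb` with the same outcome as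
`a` is strictly in between. -/
def cbAtt [PartialOrder X] (cb : Set (X × Bool)) (a b : X × Bool) : Prop :=
  a ∈ cb ∧ b ∈ cb ∧ a.2 ≠ b.2 ∧ b.1 ≤ a.1 ∧
    ¬ ∃ g ∈ cb, g.2 = a.2 ∧ b.1 < g.1 ∧ g.1 < a.1

/-- The arguments of the AF mined from casebase `D`, default argument `(dC, dO)`
and a new case: `none` is the new-case argument, `some c` the labelled cases. -/
def minedArgs (D : Set (X × Bool)) (dC : X) (dO : Bool) : Set (Option (X × Bool)) :=
  insert none (Option.some '' insert (dC, dO) D)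

/-- The attack relation of the (regular) AF mined from `D`, default `(dC, dO)` and
new case `N`: labelled cases attack each other as in `cbAtt`, and the new-case
argument attacks exactly the labelled cases `b` that are irrelevant to it,
i.e. with `¬ b.1 ≤ N`. -/
def minedAtt [PartialOrder X] (D : Set (X × Bool)) (dC : X) (dO : Bool) (N : X) :
    Option (X × Bool) → Option (X × Bool) → Prop
  | some a, some b => cbAtt (insert (dC, dO) D) a b
  | none, some b => b ∈ insert (dC, dO) D ∧ ¬ b.1 ≤ N
  | _, none => False

/-- The grounded extension of the AF mined from `D` and new case `N`. -/
def minedGrounded [PartialOrder X] (D : Set (X × Bool)) (dC : X) (dO : Bool) (N : X) :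
    Set (Option (X × Bool)) :=
  grounded (minedArgs D dC dO) (minedAtt D dC dO N)

open Classical in
/-- The AA-CBR_⪰ prediction for `N`: the default outcome `dO` if the default
argument is in the grounded extension, and the other outcome otherwise. -/
noncomputable def predict [PartialOrder X] (D : Set (X × Bool)) (dC : X) (dO : Bool)
    (N : X) : Bool :=
  if some (dC, dO) ∈ minedGrounded D dC dO N then dO else !dO

/-- A casebase is coherent if no characterisation occurs with two outcomes. -/
def coherent (D : Set (X × Bool)) : Prop :=
  ∀ a ∈ D, ∀ b ∈ D, a.1 = b.1 → a.2 = b.2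

/-- A case `a ∈ D` is nearest to `N` iff `a.1 ⪯ N`, maximally so. -/
def nearest [PartialOrder X] (D : Set (X × Bool)) (N : X) (a : X × Bool) : Prop :=
  a ∈ D ∧ a.1 ≤ N ∧ ¬ ∃ b ∈ D, a.1 < b.1 ∧ b.1 ≤ N

end AACBR

namespace AACBR

variable {X : Type}

/-- An example `p` is surprising w.r.t. a casebase `S` iff the AA-CBR_⪰
prediction for its characterisation from `S \ {p}` differs from its outcome. -/
def surprising [PartialOrder X] (dC : X) (dO : Bool) (S : Set (X × Bool))
    (p : X × Bool) : Prop :=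
  predict (S \ {p}) dC dO p.1 ≠ p.2

/-- `D'` is concise w.r.t. `D` iff `D' ⊆ D` and `D'` equals the set of examples
of `D` that are surprising w.r.t. `D'`. -/
def conciseWrt [PartialOrder X] (dC : X) (dO : Bool) (D D' : Set (X × Bool)) : Prop :=
  D' ⊆ D ∧ D' = {p ∈ D | surprising dC dO D' p}

end AACBR

namespace AACBR

variable {X : Type} [PartialOrder X]

omit [PartialOrder X] in
lemma mem_args_iff {S : Set (X × Bool)} {dC : X} {dO : Bool} {a : X × Bool} :
    some a ∈ minedArgs S dC dO ↔ a ∈ insert (dC, dO) S := by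
  simp [minedArgs]

/-- The new-case argument is in every layer of the grounded sequence. -/
lemma none_mem_groundedSeq (S : Set (X × Bool)) (dC : X) (dO : Bool) (N : X) :
    ∀ n, (none : Option (X × Bool)) ∈
      groundedSeq (minedArgs S dC dO) (minedAtt S dC dO N) n := by
  intro n
  induction n with
  | zero =>
    refine ⟨Set.mem_insert _ _, ?_⟩
    intro b _ hatt
    cases b <;> exact hatt
  | succ n ih =>
    refine ⟨Set.mem_insert _ _, ?_⟩
    intro b _ hatt
    cases b <;> exact hatt.elim

/-- Irrelevant labelled arguments never enter the grounded sequence. -/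
lemma irrelevant_not_mem {S : Set (X × Bool)} {dC : X} {dO : Bool} {N : X}
    {b : X × Bool} (hb : ¬ b.1 ≤ N) :
    ∀ n, some b ∉ groundedSeq (minedArgs S dC dO) (minedAtt S dC dO N) n := by
  intro n
  cases n with
  | zero =>
    rintro ⟨hargs, hno⟩
    exact hno none (Set.mem_insert _ _) ⟨mem_args_iff.1 hargs, hb⟩
  | succ n =>
    rintro ⟨hargs, hdef⟩
    obtain ⟨c, _, hc⟩ := hdef none (Set.mem_insert _ _) ⟨mem_args_iff.1 hargs, hb⟩
    cases c <;> exact hc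

/-- Transfer of grounded-sequence membership of relevant arguments between two
casebases agreeing on the cases ⪯ `N`. -/
lemma transfer {S T : Set (X × Bool)} {dC : X} {dO : Bool} {N : X}
    (hST : ∀ q : X × Bool, q.1 ≤ N → (q ∈ S ↔ q ∈ T)) :
    ∀ n (a : X × Bool), a.1 ≤ N →
      some a ∈ groundedSeq (minedArgs S dC dO) (minedAtt S dC dO N) n →
      some a ∈ groundedSeq (minedArgs T dC dO) (minedAtt T dC dO N) (n + 1) := by
  have hcb : ∀ q : X × Bool, q.1 ≤ N →
      (q ∈ insert (dC, dO) S ↔ q ∈ insert (dC, dO) T) := by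
    intro q hq
    simp only [Set.mem_insert_iff, hST q hq]
  have hatt : ∀ b t : X × Bool, b.1 ≤ N →
      (cbAtt (insert (dC, dO) S) b t ↔ cbAtt (insert (dC, dO) T) b t) := by
    have aux : ∀ (U V : Set (X × Bool)),
        (∀ q : X × Bool, q.1 ≤ N → (q ∈ insert (dC, dO) U ↔ q ∈ insert (dC, dO) V)) →
        ∀ b t : X × Bool, b.1 ≤ N →
        cbAtt (insert (dC, dO) U) b t → cbAtt (insert (dC, dO) V) b t := by
      rintro U V hUV b t hb ⟨h1, h2, h3, h4, h5⟩
      refine ⟨(hUV b hb).1 h1, (hUV t (h4.trans hb)).1 h2, h3, h4, ?_⟩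
      rintro ⟨g, hg, hg2, hg3, hg4⟩
      exact h5 ⟨g, (hUV g ((le_of_lt hg4).trans hb)).2 hg, hg2, hg3, hg4⟩
    intro b t hb
    exact ⟨aux S T hcb b t hb, aux T S (fun q hq => (hcb q hq).symm) b t hb⟩
  intro n
  induction n with
  | zero =>
    intro a ha h0
    obtain ⟨hargs, hno⟩ := h0
    have hacb : a ∈ insert (dC, dO) S := mem_args_iff.1 hargs
    refine ⟨mem_args_iff.2 ((hcb a ha).1 hacb), ?_⟩
    intro b _ hattb
    cases b with
    | none => exact absurd ha hattb.2
    | some b =>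
      by_cases hbN : b.1 ≤ N
      · exact absurd ((hatt b a hbN).2 hattb)
          (hno (some b) (mem_args_iff.2 ((hatt b a hbN).2 hattb).1) )
      · exact ⟨none, none_mem_groundedSeq T dC dO N 0, hattb.1, hbN⟩
  | succ n ih =>
    intro a ha h
    obtain ⟨hargs, hdef⟩ := h
    have hacb : a ∈ insert (dC, dO) S := mem_args_iff.1 hargs
    refine ⟨mem_args_iff.2 ((hcb a ha).1 hacb), ?_⟩
    intro b _ hattb
    cases b with
    | none => exact absurd ha hattb.2
    | some b =>
      by_cases hbN : b.1 ≤ N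
      · have hSatt : cbAtt (insert (dC, dO) S) b a := (hatt b a hbN).2 hattb
        obtain ⟨c, hc, hcb'⟩ := hdef (some b) (mem_args_iff.2 hSatt.1) hSatt
        cases c with
        | none => exact absurd hbN hcb'.2
        | some c =>
          have hcN : c.1 ≤ N := by
            by_contra hcN
            exact irrelevant_not_mem hcN n hc
          exact ⟨some c, ih c hcN hc, (hatt c b hcN).1 hcb'⟩
      · exact ⟨none, none_mem_groundedSeq T dC dO N (n + 1), hattb.1, hbN⟩

/-- Predictions only depend on cases ⪯ the queried characterisation. -/
lemma predict_congr {S T : Set (X × Bool)} {dC : X} {dO : Bool} {N : X}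
    (hdC : dC ≤ N)
    (hST : ∀ q : X × Bool, q.1 ≤ N → (q ∈ S ↔ q ∈ T)) :
    predict S dC dO N = predict T dC dO N := by
  have key : (some (dC, dO) ∈ minedGrounded S dC dO N) ↔
      (some (dC, dO) ∈ minedGrounded T dC dO N) := by
    constructor
    · intro h
      obtain ⟨n, hn⟩ := Set.mem_iUnion.1 h
      exact Set.mem_iUnion.2 ⟨n + 1, transfer hST n (dC, dO) hdC hn⟩
    · intro h
      obtain ⟨n, hn⟩ := Set.mem_iUnion.1 h
      exact Set.mem_iUnion.2
        ⟨n + 1, transfer (fun q hq => (hST q hq).symm) n (dC, dO) hdC hn⟩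
  unfold predict
  by_cases h : some (dC, dO) ∈ minedGrounded S dC dO N
  · rw [if_pos h, if_pos (key.1 h)]
  · rw [if_neg h, if_neg (fun hh => h (key.2 hh))]

lemma key_step {D D' D'' : Set (X × Bool)} (hcoh : coherent D)
    {dC : X} {dO : Bool} (hleast : ∀ x : X, dC ≤ x)
    (h' : conciseWrt dC dO D D') (h'' : conciseWrt dC dO D D'')
    {p : X × Bool} (hmin : ∀ q : X × Bool, q.1 < p.1 → (q ∈ D' ↔ q ∈ D''))
    (hp : p ∈ D') : p ∈ D'' := by
  have hpD : p ∈ D := h'.1 hp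
  have hST : ∀ q : X × Bool, q.1 ≤ p.1 → (q ∈ D' \ {p} ↔ q ∈ D'' \ {p}) := by
    intro q hq
    rcases lt_or_eq_of_le hq with hlt | heq
    · simp only [Set.mem_diff, Set.mem_singleton_iff, hmin q hlt]
    · constructor
      · rintro ⟨hq', hne⟩
        exact absurd (Prod.ext heq (hcoh q (h'.1 hq') p hpD heq)) hne
      · rintro ⟨hq', hne⟩
        exact absurd (Prod.ext heq (hcoh q (h''.1 hq') p hpD heq)) hne
  have hsur : surprising dC dO D' p := by
    have hp' := hp
    rw [h'.2] at hp'
    exact hp'.2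
  have hsur'' : surprising dC dO D'' p := by
    unfold surprising at hsur ⊢
    rwa [predict_congr (hleast p.1) hST] at hsur
  rw [h''.2]
  exact ⟨hpD, hsur''⟩

/-- Uniqueness of concise subsets: given a coherent casebase `D`, if `D' ⊆ D` is
concise w.r.t. `D`, then `D'` is the unique such subset. -/
theorem concise_unique {X : Type} [PartialOrder X]
    (D : Set (X × Bool)) (hfin : D.Finite) (hcoh : coherent D)
    (dC : X) (dO : Bool) (hleast : ∀ x : X, dC ≤ x)
    (D' D'' : Set (X × Bool))
    (h' : conciseWrt dC dO D D') (h'' : conciseWrt dC dO D D'') :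
    D' = D'' := by
  by_contra hne
  set sd : Set (X × Bool) := (D' \ D'') ∪ (D'' \ D') with hsd
  have hsub : sd ⊆ D := by
    intro q hq
    rcases hq with hq | hq
    · exact h'.1 hq.1
    · exact h''.1 hq.1
  have hfin' : sd.Finite := hfin.subset hsub
  have hnon : sd.Nonempty := by
    rw [Set.nonempty_iff_ne_empty]
    intro h0
    apply hne
    ext q
    have h1 : q ∉ sd := h0 ▸ Set.notMem_empty q
    simp only [hsd, Set.mem_union, Set.mem_diff, not_or, not_and, not_not] at h1
    constructor
    · intro hq; exact h1.1 hq
    · intro hq; exact h1.2 hq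
  obtain ⟨p, hp, hpmin⟩ := hfin'.exists_minimalFor Prod.fst sd hnon
  have hmin : ∀ q : X × Bool, q.1 < p.1 → (q ∈ D' ↔ q ∈ D'') := by
    intro q hq
    by_cases hqs : q ∈ sd
    · exact absurd (hpmin hqs hq.le) (not_le_of_gt hq)
    · simp only [hsd, Set.mem_union, Set.mem_diff, not_or, not_and, not_not] at hqs
      exact ⟨hqs.1, hqs.2⟩
  rcases hp with h1 | h1
  · exact h1.2 (key_step hcoh hleast h' h'' hmin h1.1)
  · exact h1.2 (key_step hcoh hleast h'' h' (fun q hq => (hmin q hq).symm) h1.1)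

end AACBR
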